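/- Let n be a natural number, let A be an n×n complex Hermitian matrix, and let λ be a real number. Let ν be the measure on ℂⁿ (maps Fin n → ℂ) with density u ↦ π^{-n}·exp(-∑_j |u_j|²) with respect to Lebesgue measure. Then the matrix 1 - iλ·A is invertible and ∫_{ℂⁿ} exp(i·λ·∑_{j,k} u_j · A_{jk} · conj(u_k)) dν(u) = (det(1 - iλ·A))⁻¹. -/

import Mathlib

open MeasureTheory Matrix

lemma integral_cexp_neg_mul_norm_sq {c : ℂ} (hc : 0 < c.re) :
    ∫ z : ℂ, Complex.exp (-(c * (‖z‖ : ℂ) ^ 2)) = (Real.pi : ℂ) / c := by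
  have hc0 : c ≠ 0 := fun h => by simp [h] at hc
  have key : ∀ p : ℝ × ℝ,
      Complex.exp (-(c * (‖(Complex.measurableEquivRealProd.symm p : ℂ)‖ : ℂ) ^ 2))
        = Complex.exp (-c * (p.1 : ℂ) ^ 2) * Complex.exp (-c * (p.2 : ℂ) ^ 2) := by
    intro p
    rw [← Complex.exp_add]
    congr 1
    have h1 : ((‖(Complex.measurableEquivRealProd.symm p : ℂ)‖ : ℂ)) ^ 2
        = (p.1 : ℂ) ^ 2 + (p.2 : ℂ) ^ 2 := by
      have h2 : (‖(Complex.measurableEquivRealProd.symm p : ℂ)‖ : ℝ) ^ 2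
          = p.1 ^ 2 + p.2 ^ 2 := by
        simp [Complex.measurableEquivRealProd_symm_apply, Complex.sq_norm,
          Complex.normSq_apply]; ring
      calc ((‖(Complex.measurableEquivRealProd.symm p : ℂ)‖ : ℂ)) ^ 2
          = ((‖(Complex.measurableEquivRealProd.symm p : ℂ)‖ ^ 2 : ℝ) : ℂ) := by push_cast; ring
        _ = (p.1 : ℂ) ^ 2 + (p.2 : ℂ) ^ 2 := by rw [h2]; push_cast; ring
    rw [h1]; ring
  rw [← (Complex.volume_preserving_equiv_real_prod.symm).integral_comp
      Complex.measurableEquivRealProd.symm.measurableEmbedding]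
  simp_rw [key]
  rw [show (volume : Measure (ℝ × ℝ)) = (volume : Measure ℝ).prod volume from rfl,
    integral_prod_mul (f := fun a : ℝ => Complex.exp (-c * (a:ℂ)^2)) (g := fun a : ℝ => Complex.exp (-c * (a:ℂ)^2)), integral_gaussian_complex hc,
    ← Complex.cpow_add _ _ (div_ne_zero (by exact_mod_cast Real.pi_ne_zero) hc0)]
  norm_num

lemma sum_norm_sq_mulVec {n : ℕ} (M : Matrix (Fin n) (Fin n) ℂ)
    (hM2 : star M * M = 1) (u : Fin n → ℂ) :
    ∑ j, ‖(M *ᵥ u) j‖ ^ 2 = ∑ j, ‖u j‖ ^ 2 := by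
  have key : ∀ v : Fin n → ℂ, ((∑ j, ‖v j‖ ^ 2 : ℝ) : ℂ) = star v ⬝ᵥ v := by
    intro v
    push_cast
    simp only [dotProduct, Pi.star_apply, Complex.star_def]
    congr 1; ext j
    rw [mul_comm, Complex.mul_conj, Complex.normSq_eq_norm_sq]
    push_cast; ring
  have h : ((∑ j, ‖(M *ᵥ u) j‖ ^ 2 : ℝ) : ℂ) = ((∑ j, ‖u j‖ ^ 2 : ℝ) : ℂ) := by
    rw [key, key, star_mulVec, dotProduct_mulVec, vecMul_vecMul, ← star_eq_conjTranspose,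
      hM2, vecMul_one]
  exact_mod_cast h

lemma integrable_gauss_c : Integrable (fun z : ℂ => Real.exp (-‖z‖ ^ 2)) := by
  rw [← (Complex.volume_preserving_equiv_real_prod.symm).integrable_comp_emb
      Complex.measurableEquivRealProd.symm.measurableEmbedding]
  have : ((fun z : ℂ => Real.exp (-‖z‖ ^ 2)) ∘ Complex.measurableEquivRealProd.symm)
      = fun p : ℝ × ℝ => Real.exp (-1 * p.1 ^ 2) * Real.exp (-1 * p.2 ^ 2) := by
    ext p
    simp only [Function.comp_apply, ← Real.exp_add, Complex.measurableEquivRealProd_symm_apply]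
    congr 1
    rw [Complex.sq_norm, Complex.normSq_apply]
    ring
  rw [this, show (volume : Measure (ℝ × ℝ)) = (volume : Measure ℝ).prod volume from rfl]
  exact (integrable_exp_neg_mul_sq one_pos).mul_prod (integrable_exp_neg_mul_sq one_pos)

lemma integrable_gauss {n : ℕ} :
    Integrable (fun u : Fin n → ℂ => Real.exp (-∑ j, ‖u j‖ ^ 2)) := by
  have : (fun u : Fin n → ℂ => Real.exp (-∑ j, ‖u j‖ ^ 2))
      = fun u : Fin n → ℂ => ∏ j, Real.exp (-‖u j‖ ^ 2) := by
    ext u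
    rw [← Real.exp_sum, ← Finset.sum_neg_distrib]
  rw [this]
  exact Integrable.fintype_prod (fun _ => integrable_gauss_c)

lemma measurePreserving_mulVec {n : ℕ} (M : Matrix (Fin n) (Fin n) ℂ)
    (hM1 : M * star M = 1) (hM2 : star M * M = 1) :
    MeasurePreserving (fun u : Fin n → ℂ => M *ᵥ u) volume volume := by
  have hinv : Invertible M := ⟨star M, hM2, hM1⟩
  let e : (Fin n → ℂ) ≃ₗ[ℂ] (Fin n → ℂ) := Matrix.toLinearEquiv' M hinv
  let f : (Fin n → ℂ) ≃ₗ[ℝ] (Fin n → ℂ) := e.restrictScalars ℝ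
  have hfe : (fun u : Fin n → ℂ => M *ᵥ u) = ⇑(f : (Fin n → ℂ) →ₗ[ℝ] (Fin n → ℂ)) := rfl
  have hdet : LinearMap.det ((f : (Fin n → ℂ) →ₗ[ℝ] (Fin n → ℂ))) ≠ 0 := f.isUnit_det'.ne_zero
  set c := ENNReal.ofReal |(LinearMap.det ((f : (Fin n → ℂ) →ₗ[ℝ] (Fin n → ℂ))))⁻¹| with hc
  have hmap : Measure.map (fun u : Fin n → ℂ => M *ᵥ u) volume = c • volume := by
    rw [hfe]; exact Measure.map_linearMap_addHaar_eq_smul_addHaar volume hdet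
  have hmeas : Measurable (fun u : Fin n → ℂ => M *ᵥ u) := by
    rw [hfe]; exact (LinearMap.continuous_of_finiteDimensional _).measurable
  have hgmeas : Measurable (fun u : Fin n → ℂ => ENNReal.ofReal (Real.exp (-∑ j, ‖u j‖ ^ 2))) := by
    apply ENNReal.measurable_ofReal.comp
    apply Continuous.measurable
    fun_prop
  set I := ∫⁻ u : Fin n → ℂ, ENNReal.ofReal (Real.exp (-∑ j, ‖u j‖ ^ 2)) with hIdef
  have hI : c * I = I := by
    have h1 : ∫⁻ u : Fin n → ℂ, ENNReal.ofReal (Real.exp (-∑ j, ‖u j‖ ^ 2))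
          ∂(Measure.map (fun u : Fin n → ℂ => M *ᵥ u) volume) = I := by
      rw [lintegral_map hgmeas hmeas]
      simp_rw [sum_norm_sq_mulVec M hM2]
      exact hIdef.symm
    rwa [hmap, lintegral_smul_measure] at h1
  have hIpos : I ≠ 0 := by
    rw [hIdef]
    refine ((lintegral_pos_iff_support hgmeas).mpr ?_).ne'
    have hsupp : Function.support (fun u : Fin n → ℂ =>
        ENNReal.ofReal (Real.exp (-∑ j, ‖u j‖ ^ 2))) = Set.univ := by
      ext u
      simp [Function.mem_support, ENNReal.ofReal_eq_zero, not_le, Real.exp_pos]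
    rw [hsupp]
    exact isOpen_univ.measure_pos volume ⟨0, trivial⟩
  have hIfin : I ≠ ⊤ := by
    have h2 := integrable_gauss (n := n) |>.hasFiniteIntegral
    rw [HasFiniteIntegral] at h2
    have : ∀ u : Fin n → ℂ, ‖Real.exp (-∑ j, ‖u j‖ ^ 2)‖ₑ
        = ENNReal.ofReal (Real.exp (-∑ j, ‖u j‖ ^ 2)) :=
      fun u => Real.enorm_eq_ofReal (Real.exp_nonneg _)
    simp_rw [this] at h2
    exact h2.ne
  have hc1 : c = 1 := by
    have h3 : c * I = 1 * I := by rw [hI, one_mul]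
    exact (ENNReal.mul_left_inj hIpos hIfin).mp h3
  refine ⟨hmeas, ?_⟩
  rw [hmap, hc1, one_smul]


/-- For an `n × n` Hermitian matrix `A` and a real `λ`, the matrix `1 - i·λ·A` is
invertible and the Gaussian integral of `exp(i·λ·u A u*)` over `ℂⁿ` with the standard
Gaussian measure equals `det(1 - i·λ·A)⁻¹`. -/
theorem gaussian_integral_det_inv (n : ℕ) (A : Matrix (Fin n) (Fin n) ℂ)
    (hA : A.IsHermitian) (lam : ℝ)
    (ν : Measure (Fin n → ℂ))
    (hν : ν = volume.withDensity
      (fun u => ENNReal.ofReal ((Real.pi ^ n)⁻¹ * Real.exp (-∑ j, ‖u j‖ ^ 2)))) :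
    IsUnit (1 - (Complex.I * (lam : ℂ)) • A) ∧
      ∫ u : Fin n → ℂ,
          Complex.exp (Complex.I * (lam : ℂ) *
            ∑ j, ∑ k, u j * A j k * (starRingEnd ℂ) (u k)) ∂ν
        = ((1 - (Complex.I * (lam : ℂ)) • A).det)⁻¹ := by
  set U : Matrix (Fin n) (Fin n) ℂ := (hA.eigenvectorUnitary : Matrix (Fin n) (Fin n) ℂ) with hUdef
  set d : Fin n → ℝ := hA.eigenvalues with hddef
  set D : Matrix (Fin n) (Fin n) ℂ := diagonal (fun j => (d j : ℂ)) with hDdef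
  have hspec : A = U * D * star U := by
    have := hA.spectral_theorem
    rw [Unitary.conjStarAlgAut_apply] at this
    exact this
  have hU1 : U * star U = 1 := (Matrix.mem_unitaryGroup_iff).mp (hA.eigenvectorUnitary).2
  have hU2 : star U * U = 1 := (Matrix.mem_unitaryGroup_iff').mp (hA.eigenvectorUnitary).2
  set c : ℂ := Complex.I * (lam : ℂ) with hcdef
  -- determinant
  have hstarT : star (Uᵀ) = (star U)ᵀ := by
    simp only [star_eq_conjTranspose]
    ext i j
    rfl
  have h1A : (1 : Matrix (Fin n) (Fin n) ℂ) - c • A = U * ((1 : Matrix (Fin n) (Fin n) ℂ) - c • D) * star U := by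
    rw [hspec, Matrix.mul_sub, Matrix.sub_mul, Matrix.mul_one, hU1]
    congr 1
    rw [Matrix.mul_smul, Matrix.smul_mul]
  have hdiag : (1 : Matrix (Fin n) (Fin n) ℂ) - c • D = diagonal (fun j => 1 - c * (d j : ℂ)) := by
    ext i j
    rw [hDdef]
    by_cases h : i = j <;>
      simp [h, diagonal, Matrix.one_apply, Matrix.sub_apply, Matrix.smul_apply]
  have hdet : ((1 : Matrix (Fin n) (Fin n) ℂ) - c • A).det = ∏ j, (1 - c * (d j : ℂ)) := by
    rw [h1A, det_mul, det_mul, hdiag, det_diagonal]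
    have hdetU : U.det * (star U).det = 1 := by rw [← det_mul, hU1, det_one]
    calc U.det * (∏ j, (1 - c * (d j : ℂ))) * (star U).det
        = (∏ j, (1 - c * (d j : ℂ))) * (U.det * (star U).det) := by ring
      _ = ∏ j, (1 - c * (d j : ℂ)) := by rw [hdetU, mul_one]
  have hcre : ∀ j, (1 - c * (d j : ℂ)).re = 1 := by
    intro j
    simp [hcdef, Complex.sub_re, Complex.mul_re, Complex.mul_im]
  have hcne : ∀ j, (1 - c * (d j : ℂ)) ≠ 0 := by
    intro j h
    have := hcre j
    rw [h] at this
    simp at this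
  have hdetne : ((1 : Matrix (Fin n) (Fin n) ℂ) - c • A).det ≠ 0 := by
    rw [hdet]
    exact Finset.prod_ne_zero_iff.mpr (fun j _ => hcne j)
  refine ⟨(Matrix.isUnit_iff_isUnit_det _).mpr (isUnit_iff_ne_zero.mpr hdetne), ?_⟩
  -- the unitary change of variables
  set M : Matrix (Fin n) (Fin n) ℂ := Uᵀ with hMdef
  have hM1 : M * star M = 1 := by
    rw [hMdef, hstarT, ← transpose_mul, hU2, transpose_one]
  have hM2 : star M * M = 1 := by
    rw [hMdef, hstarT, ← transpose_mul, hU1, transpose_one]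
  have hMP := measurePreserving_mulVec M hM1 hM2
  have hinvM : Invertible M := ⟨star M, hM2, hM1⟩
  have hemb : MeasurableEmbedding (fun u : Fin n → ℂ => M *ᵥ u) :=
    (Matrix.toLinearEquiv' M hinvM).toContinuousLinearEquiv.toHomeomorph.measurableEmbedding
  -- the quadratic form diagonalizes
  have hq : ∀ u : Fin n → ℂ,
      (∑ j, ∑ k, u j * A j k * (starRingEnd ℂ) (u k))
        = ∑ m, (d m : ℂ) * ((‖(M *ᵥ u) m‖ ^ 2 : ℝ) : ℂ) := by
    intro u
    have h1 : (∑ j, ∑ k, u j * A j k * (starRingEnd ℂ) (u k)) = u ⬝ᵥ (A *ᵥ star u) := by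
      simp only [dotProduct, mulVec, Pi.star_apply, Complex.star_def, Finset.mul_sum]
      exact Finset.sum_congr rfl fun j _ => Finset.sum_congr rfl fun k _ => by ring
    have hsv : star U *ᵥ star u = star (M *ᵥ u) := by
      rw [star_mulVec, ← star_eq_conjTranspose, hstarT, vecMul_transpose]
    have h2 : A *ᵥ star u = U *ᵥ (D *ᵥ star (M *ᵥ u)) := by
      rw [hspec, ← mulVec_mulVec, ← mulVec_mulVec, hsv]
    rw [h1, h2, dotProduct_mulVec]
    have h3 : u ᵥ* U = M *ᵥ u := by rw [hMdef, mulVec_transpose]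
    rw [h3]
    simp only [dotProduct, hDdef, mulVec_diagonal, Pi.star_apply, Complex.star_def]
    refine Finset.sum_congr rfl fun m _ => ?_
    rw [show (M *ᵥ u) m * ((d m : ℂ) * (starRingEnd ℂ) ((M *ᵥ u) m))
        = (d m : ℂ) * ((M *ᵥ u) m * (starRingEnd ℂ) ((M *ᵥ u) m)) from by ring,
      Complex.mul_conj, Complex.normSq_eq_norm_sq]
  -- rewrite the ν-integral as a volume integral
  have hρmeas : Measurable (fun u : Fin n → ℂ =>
      Real.toNNReal ((Real.pi ^ n)⁻¹ * Real.exp (-∑ j, ‖u j‖ ^ 2))) := by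
    apply measurable_real_toNNReal.comp
    apply Continuous.measurable
    fun_prop
  rw [hν, show (volume.withDensity fun u : Fin n → ℂ =>
        ENNReal.ofReal ((Real.pi ^ n)⁻¹ * Real.exp (-∑ j, ‖u j‖ ^ 2)))
      = volume.withDensity (fun u : Fin n → ℂ =>
        ((Real.toNNReal ((Real.pi ^ n)⁻¹ * Real.exp (-∑ j, ‖u j‖ ^ 2)) : NNReal) : ENNReal))
      from rfl,
    integral_withDensity_eq_integral_smul hρmeas]
  set F : (Fin n → ℂ) → ℂ := fun v => ∏ m, ((Real.pi : ℂ))⁻¹ *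
    Complex.exp (-((1 - c * (d m : ℂ)) * ((‖v m‖ ^ 2 : ℝ) : ℂ))) with hFdef
  have hpt : ∀ u : Fin n → ℂ,
      (Real.toNNReal ((Real.pi ^ n)⁻¹ * Real.exp (-∑ j, ‖u j‖ ^ 2))) •
        Complex.exp (c * ∑ j, ∑ k, u j * A j k * (starRingEnd ℂ) (u k)) = F (M *ᵥ u) := by
    intro u
    have hnormpre : ∑ m, ‖(M *ᵥ u) m‖ ^ 2 = ∑ j, ‖u j‖ ^ 2 := sum_norm_sq_mulVec M hM2 u
    have hsum : ∑ m, -((1 - c * (d m : ℂ)) * ((‖(M *ᵥ u) m‖ ^ 2 : ℝ) : ℂ))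
        = ((-∑ j, ‖u j‖ ^ 2 : ℝ) : ℂ)
          + c * ∑ j, ∑ k, u j * A j k * (starRingEnd ℂ) (u k) := by
      rw [hq u]
      calc ∑ m, -((1 - c * (d m : ℂ)) * ((‖(M *ᵥ u) m‖ ^ 2 : ℝ) : ℂ))
          = ∑ m, (-((‖(M *ᵥ u) m‖ ^ 2 : ℝ) : ℂ)
              + c * ((d m : ℂ) * ((‖(M *ᵥ u) m‖ ^ 2 : ℝ) : ℂ))) :=
            Finset.sum_congr rfl fun m _ => by ring
        _ = -∑ m, ((‖(M *ᵥ u) m‖ ^ 2 : ℝ) : ℂ)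
              + c * ∑ m, (d m : ℂ) * ((‖(M *ᵥ u) m‖ ^ 2 : ℝ) : ℂ) := by
            rw [Finset.sum_add_distrib, Finset.sum_neg_distrib, Finset.mul_sum]
        _ = ((-∑ j, ‖u j‖ ^ 2 : ℝ) : ℂ)
              + c * ∑ m, (d m : ℂ) * ((‖(M *ᵥ u) m‖ ^ 2 : ℝ) : ℂ) := by
            congr 1
            push_cast [← hnormpre]
            ring
    rw [hFdef]
    simp only []
    rw [Finset.prod_mul_distrib, Finset.prod_const, ← Complex.exp_sum, hsum, Complex.exp_add,
      Finset.card_univ, Fintype.card_fin, NNReal.smul_def,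
      Real.coe_toNNReal _ (by positivity), Complex.real_smul]
    push_cast [Complex.ofReal_exp]
    ring
  simp_rw [hpt]
  rw [hMP.integral_comp hemb F, hFdef]
  beta_reduce
  rw [integral_fintype_prod_volume_eq_prod (f := fun (m : Fin n) (z : ℂ) =>
    (Real.pi : ℂ)⁻¹ * Complex.exp (-((1 - c * (d m : ℂ)) * ((‖z‖ ^ 2 : ℝ) : ℂ))))]
  have hfactor : ∀ m : Fin n, ∫ z : ℂ,
      (Real.pi : ℂ)⁻¹ * Complex.exp (-((1 - c * (d m : ℂ)) * ((‖z‖ ^ 2 : ℝ) : ℂ)))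
        = (1 - c * (d m : ℂ))⁻¹ := by
    intro m
    have hre : 0 < (1 - c * (d m : ℂ)).re := by rw [hcre m]; norm_num
    have hcast : ∀ z : ℂ, ((‖z‖ ^ 2 : ℝ) : ℂ) = ((‖z‖ : ℂ)) ^ 2 := by
      intro z; push_cast; ring
    simp_rw [hcast]
    rw [integral_const_mul, integral_cexp_neg_mul_norm_sq hre]
    have hπ : (Real.pi : ℂ) ≠ 0 := by exact_mod_cast Real.pi_ne_zero
    field_simp
  simp_rw [hfactor]
  rw [hdet, ← Finset.prod_inv_distrib]
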